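/- Let G be a connected simple graph, t a nonnegative integer, and suppose G has a distance t-approximating tree: a tree T on the same vertex set V(G) such that |d_G(u,v) − d_T(u,v)| ≤ t for all u, v ∈ V(G). Then G is 2t-hyperbolic: for all vertices x, y, u, v, d_G(x,y) + d_G(u,v) ≤ max(d_G(x,u) + d_G(y,v), d_G(x,v) + d_G(y,u)) + 4t. -/

import Mathlib

open SimpleGraph

/-- A walk whose length equals the distance between its endpoints is a path. -/
lemma walk_isPath_of_length_eq_dist {V : Type*} {G : SimpleGraph V} :
    ∀ {u v : V} (w : G.Walk u v), w.length = G.dist u v → w.IsPath := by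
  classical
  intro u v w
  induction w with
  | nil => intro _; exact Walk.IsPath.nil
  | @cons u x v h p ih =>
    intro hlen
    have hreach : G.Reachable x v := ⟨p⟩
    obtain ⟨q, hq⟩ := hreach.exists_walk_length_eq_dist
    have h1 : G.dist u v ≤ 1 + G.dist x v := by
      have := SimpleGraph.dist_le (Walk.cons h q)
      simpa [hq, Nat.add_comm] using this
    have h2 : G.dist x v ≤ p.length := SimpleGraph.dist_le p
    have hlen' : (Walk.cons h p).length = p.length + 1 := by simp
    have hpl : p.length = G.dist x v := by omega
    have hpp : p.IsPath := ih hpl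
    have hu : u ∉ p.support := by
      intro hmem
      have hd := SimpleGraph.dist_le (p.dropUntil u hmem)
      have hle := Walk.length_dropUntil_le p hmem
      omega
    exact hpp.cons hu

/-- In a tree, every path realizes the distance between its endpoints. -/
lemma tree_path_length_eq_dist {V : Type*} {T : SimpleGraph V} (hT : T.IsTree)
    {u v : V} (p : T.Walk u v) (hp : p.IsPath) : p.length = T.dist u v := by
  obtain ⟨q, hq⟩ := hT.isConnected.exists_walk_length_eq_dist u v
  have hqp : q.IsPath := walk_isPath_of_length_eq_dist q hq
  have := hT.IsAcyclic.path_unique ⟨p, hp⟩ ⟨q, hqp⟩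
  have hw : p = q := congrArg Subtype.val this
  rw [hw, hq]

/-- Splitting a path in a tree at a support vertex splits the distance. -/
lemma tree_dist_split {V : Type*} {T : SimpleGraph V} (hT : T.IsTree)
    {u v w : V} (p : T.Walk u v) (hp : p.IsPath) (hw : w ∈ p.support) :
    T.dist u w + T.dist w v = T.dist u v := by
  classical
  have h1 := tree_path_length_eq_dist hT (p.takeUntil w hw) (hp.takeUntil hw)
  have h2 := tree_path_length_eq_dist hT (p.dropUntil w hw) (hp.dropUntil hw)
  have h3 := tree_path_length_eq_dist hT p hp
  have h4 : (p.takeUntil w hw).append (p.dropUntil w hw) = p := p.take_spec hw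
  have h5 := congrArg Walk.length h4
  rw [Walk.length_append] at h5
  omega

/-- In a tree, a vertex metrically between `x` and `y` lies on any path from `x` to `y`. -/
lemma tree_mem_support_of_dist_add {V : Type*} {T : SimpleGraph V} (hT : T.IsTree)
    {x y w : V} (h : T.dist x w + T.dist w y = T.dist x y)
    (p : T.Walk x y) (hp : p.IsPath) : w ∈ p.support := by
  obtain ⟨q1, hq1⟩ := hT.isConnected.exists_walk_length_eq_dist x w
  obtain ⟨q2, hq2⟩ := hT.isConnected.exists_walk_length_eq_dist w y
  have hlen : (q1.append q2).length = T.dist x y := by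
    rw [Walk.length_append, hq1, hq2, h]
  have hW : (q1.append q2).IsPath := walk_isPath_of_length_eq_dist _ hlen
  have := hT.IsAcyclic.path_unique ⟨q1.append q2, hW⟩ ⟨p, hp⟩
  have hw' : q1.append q2 = p := congrArg Subtype.val this
  rw [← hw']
  rw [Walk.mem_support_append_iff]
  exact Or.inl (Walk.end_mem_support q1)

/-- Two vertices both metrically between `x` and `y` in a tree are comparable. -/
lemma tree_between_compare {V : Type*} {T : SimpleGraph V} (hT : T.IsTree)
    {x y m1 m2 : V} (h1 : T.dist x m1 + T.dist m1 y = T.dist x y)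
    (h2 : T.dist x m2 + T.dist m2 y = T.dist x y) :
    T.dist x m1 + T.dist m1 m2 = T.dist x m2 ∨
      T.dist x m2 + T.dist m2 m1 = T.dist x m1 := by
  classical
  obtain ⟨p, hp⟩ := hT.isConnected.exists_walk_length_eq_dist x y
  have hpp : p.IsPath := walk_isPath_of_length_eq_dist p hp
  have hm1 : m1 ∈ p.support := tree_mem_support_of_dist_add hT h1 p hpp
  have hm2 : m2 ∈ p.support := tree_mem_support_of_dist_add hT h2 p hpp
  have hsplit : m2 ∈ (p.takeUntil m1 hm1).support ∨ m2 ∈ (p.dropUntil m1 hm1).support := by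
    rw [← Walk.mem_support_append_iff, p.take_spec hm1]
    exact hm2
  rcases hsplit with hc | hc
  · right
    have := tree_dist_split hT (p.takeUntil m1 hm1) (hpp.takeUntil hm1) hc
    exact this
  · left
    have hs := tree_dist_split hT (p.dropUntil m1 hm1) (hpp.dropUntil hm1) hc
    -- hs : dist m1 m2 + dist m2 y = dist m1 y
    omega

/-- Neighbor dichotomy in a tree: distances to adjacent vertices differ by exactly one. -/
lemma tree_adj_dist {V : Type*} {T : SimpleGraph V} (hT : T.IsTree)
    {a a' : V} (h : T.Adj a a') (c : V) :
    T.dist a c = T.dist a' c + 1 ∨ T.dist a' c = T.dist a c + 1 := by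
  classical
  obtain ⟨p, hp⟩ := hT.isConnected.exists_walk_length_eq_dist a c
  have hpp : p.IsPath := walk_isPath_of_length_eq_dist p hp
  by_cases hmem : a' ∈ p.support
  · left
    have hs := tree_dist_split hT p hpp hmem
    have had : T.dist a a' = 1 := SimpleGraph.dist_eq_one_iff_adj.mpr h
    omega
  · right
    have hcons : (Walk.cons h.symm p).IsPath := hpp.cons hmem
    have := tree_path_length_eq_dist hT (Walk.cons h.symm p) hcons
    simp only [Walk.length_cons] at this
    omega

/-- Every triple of vertices in a tree has a median. -/
lemma tree_median {V : Type*} {T : SimpleGraph V} (hT : T.IsTree) (a b c : V) :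
    ∃ m : V, T.dist a m + T.dist m b = T.dist a b ∧
      T.dist a m + T.dist m c = T.dist a c ∧
      T.dist b m + T.dist m c = T.dist b c := by
  suffices H : ∀ n : ℕ, ∀ a b c : V, T.dist a b = n →
      ∃ m : V, T.dist a m + T.dist m b = T.dist a b ∧
        T.dist a m + T.dist m c = T.dist a c ∧
        T.dist b m + T.dist m c = T.dist b c from H (T.dist a b) a b c rfl
  intro n
  induction n using Nat.strong_induction_on with
  | _ n ih =>
    intro a b c hab
    rcases Nat.eq_zero_or_pos n with hn | hn
    · -- a = b
      have : a = b := hT.isConnected.dist_eq_zero_iff.mp (hab.trans hn)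
      subst this
      refine ⟨a, ?_, ?_, ?_⟩ <;> simp [SimpleGraph.dist_self]
    · obtain ⟨p, hp⟩ := hT.isConnected.exists_walk_length_eq_dist a b
      have hpp : p.IsPath := walk_isPath_of_length_eq_dist p hp
      cases p with
      | nil => simp at hp; have h0 : T.dist a a = 0 := SimpleGraph.dist_self; omega
      | @cons _ a' _ hadj q =>
        have hq : q.IsPath := hpp.of_cons
        have hqlen : q.length = T.dist a' b := tree_path_length_eq_dist hT q hq
        have hlen : q.length + 1 = n := by
          simpa [hab] using hp
        have ha'b : T.dist a' b = n - 1 := by omega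
        obtain ⟨m, hm1, hm2, hm3⟩ := ih (n - 1) (by omega) a' b c ha'b
        have had : T.dist a a' = 1 := SimpleGraph.dist_eq_one_iff_adj.mpr hadj
        -- dichotomy for m
        have hdm : T.dist a m = T.dist a' m + 1 := by
          rcases tree_adj_dist hT hadj m with hcase | hcase
          · exact hcase
          · exfalso
            have htri : T.dist a b ≤ T.dist a m + T.dist m b :=
              hT.isConnected.dist_triangle
            omega
        rcases tree_adj_dist hT hadj c with hcase | hcase
        · -- dist a c = dist a' c + 1 : m is still a median
          exact ⟨m, by omega, by omega, by omega⟩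
        · -- dist a' c = dist a c + 1 : a itself is the median; first show m = a'
          have hbetween : T.dist a' a + T.dist a c = T.dist a' c := by
            have : T.dist a' a = T.dist a a' := SimpleGraph.dist_comm
            omega
          have hm2' : T.dist a' m + T.dist m c = T.dist a' c := hm2
          have hma' : m = a' := by
            rcases tree_between_compare hT hbetween hm2' with hcc | hcc
            · -- dist a' a + dist a m = dist a' m
              exfalso
              have e1 : T.dist a' a = T.dist a a' := SimpleGraph.dist_comm
              omega
            · -- dist a' m + dist m a = dist a' a = 1
              have e1 : T.dist a' a = T.dist a a' := SimpleGraph.dist_comm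
              have e2 : T.dist m a = T.dist a m := SimpleGraph.dist_comm
              have hz : T.dist a' m = 0 := by omega
              exact (hT.isConnected.dist_eq_zero_iff.mp
                (by rw [SimpleGraph.dist_comm]; exact hz))
          subst hma'
          refine ⟨a, ?_, ?_, ?_⟩
          · simp [SimpleGraph.dist_self]
          · simp [SimpleGraph.dist_self]
          · have e1 : T.dist b a = T.dist a b := SimpleGraph.dist_comm
            have e2 : T.dist b m = T.dist m b := SimpleGraph.dist_comm
            omega

/-- The four-point condition (0-hyperbolicity) for trees. -/
lemma tree_four_point {V : Type*} {T : SimpleGraph V} (hT : T.IsTree)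
    (x y u v : V) :
    T.dist x y + T.dist u v ≤
      max (T.dist x u + T.dist y v) (T.dist x v + T.dist y u) := by
  obtain ⟨m1, a1, a2, a3⟩ := tree_median hT x y u
  obtain ⟨m2, b1, b2, b3⟩ := tree_median hT x y v
  have htri1 : T.dist u v ≤ T.dist u m1 + T.dist m1 v :=
    hT.isConnected.dist_triangle
  have htri2 : T.dist m1 v ≤ T.dist m1 m2 + T.dist m2 v :=
    hT.isConnected.dist_triangle
  have htri3 : T.dist u v ≤ T.dist u m2 + T.dist m2 v :=
    hT.isConnected.dist_triangle
  have htri4 : T.dist u m2 ≤ T.dist u m1 + T.dist m1 m2 :=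
    hT.isConnected.dist_triangle
  have c1 : T.dist u m1 = T.dist m1 u := SimpleGraph.dist_comm
  have c2 : T.dist m2 v = T.dist v m2 := SimpleGraph.dist_comm
  have c3 : T.dist m1 m2 = T.dist m2 m1 := SimpleGraph.dist_comm
  have c4 : T.dist y m1 = T.dist m1 y := SimpleGraph.dist_comm
  have c5 : T.dist y m2 = T.dist m2 y := SimpleGraph.dist_comm
  rcases tree_between_compare hT a1 b1 with hcc | hcc
  · -- dist x m1 + dist m1 m2 = dist x m2 : bound by d(x,v) + d(y,u)
    have hmax := le_max_right (T.dist x u + T.dist y v) (T.dist x v + T.dist y u)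
    have : T.dist x y + T.dist u v ≤ T.dist x v + T.dist y u := by omega
    omega
  · -- dist x m2 + dist m2 m1 = dist x m1 : bound by d(x,u) + d(y,v)
    have hmax := le_max_left (T.dist x u + T.dist y v) (T.dist x v + T.dist y u)
    have : T.dist x y + T.dist u v ≤ T.dist x u + T.dist y v := by omega
    omega

/-- If a connected graph `G` has a distance `t`-approximating tree `T` (a tree on
the same vertex set with `|d_G(u,v) - d_T(u,v)| ≤ t` for all `u, v`), then `G` is
`2t`-hyperbolic. -/
theorem hyperbolic_of_approximating_tree {V : Type*} (G : SimpleGraph V)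
    (hG : G.Connected) (t : ℕ) (T : SimpleGraph V) (hT : T.IsTree)
    (happrox : ∀ u v : V, G.dist u v ≤ T.dist u v + t ∧ T.dist u v ≤ G.dist u v + t) :
    ∀ x y u v : V,
      G.dist x y + G.dist u v ≤
        max (G.dist x u + G.dist y v) (G.dist x v + G.dist y u) + 4 * t := by
  intro x y u v
  have h4 := tree_four_point hT x y u v
  obtain ⟨hxy1, hxy2⟩ := happrox x y
  obtain ⟨huv1, huv2⟩ := happrox u v
  obtain ⟨hxu1, hxu2⟩ := happrox x u
  obtain ⟨hyv1, hyv2⟩ := happrox y v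
  obtain ⟨hxv1, hxv2⟩ := happrox x v
  obtain ⟨hyu1, hyu2⟩ := happrox y u
  have hm1 := le_max_left (G.dist x u + G.dist y v) (G.dist x v + G.dist y u)
  have hm2 := le_max_right (G.dist x u + G.dist y v) (G.dist x v + G.dist y u)
  rcases le_max_iff.mp h4 with hcase | hcase <;> omega
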